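/- Let X be a T0, locally compact, supercompact topological space. Then there exists a continuous map r : W(X) → X (with W(X) carrying the topology ^S T) such that r(pure x) = x for all x ∈ X, and for every ultrafilter U on X the set of cluster points of U in X equals the closure of the singleton {r(U)}. (Proposition 4.3 of the paper.) -/

import Mathlib

open Filter Topology


/-- The "standard" topology `^S T` on the space of ultrafilters `W(X) = Ultrafilter X`,
generated by the sets `Ĝ = {U | G ∈ U}` for `G` open in `X`. -/
def sTop (X : Type*) [TopologicalSpace X] : TopologicalSpace (Ultrafilter X) :=
  TopologicalSpace.generateFrom
    {s : Set (Ultrafilter X) | ∃ G : Set X, IsOpen G ∧ s = {U : Ultrafilter X | G ∈ U}}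

/-- Proposition 4.3: for `X` a T0, locally compact, supercompact space
there is a continuous `r : W(X) → X` with `r (pure x) = x` for all `x`, and such that
for every ultrafilter `U` on `X` the set of cluster points of `U` equals the closure
of `{r U}`. -/
theorem stmt11 (X : Type*) [TopologicalSpace X] [T0Space X] [LocallyCompactSpace X]
    (hsc : ∀ V : Ultrafilter X, ∃ y : X, {z : X | ClusterPt z ↑V} = closure {y}) :
    ∃ r : Ultrafilter X → X,
      @Continuous (Ultrafilter X) X (sTop X) _ r ∧
      (∀ x : X, r (pure x) = x) ∧
      (∀ U : Ultrafilter X, {z : X | ClusterPt z ↑U} = closure {r U}) := by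
  classical
  letI : TopologicalSpace (Ultrafilter X) := sTop X
  set r : Ultrafilter X → X := fun U => (hsc U).choose with hr
  have hcl : ∀ U : Ultrafilter X, {z : X | ClusterPt z ↑U} = closure {r U} :=
    fun U => (hsc U).choose_spec
  have hrU_cluster : ∀ U : Ultrafilter X, ClusterPt (r U) ↑U := by
    intro U
    have h : r U ∈ closure ({r U} : Set X) := subset_closure rfl
    rw [← hcl U] at h
    exact h
  refine ⟨r, ?_, ?_, hcl⟩
  · rw [continuous_def]
    intro G hG
    have hpre : r ⁻¹' G =
        ⋃ V ∈ {V : Set X | IsOpen V ∧ ∃ K : Set X, IsCompact K ∧ V ⊆ K ∧ K ⊆ G},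
          {U : Ultrafilter X | V ∈ U} := by
      ext U
      simp only [Set.mem_preimage, Set.mem_iUnion, Set.mem_setOf_eq, exists_prop]
      constructor
      · intro h
        obtain ⟨K, hKmem, hKG, hKcomp⟩ :=
          local_compact_nhds (show G ∈ 𝓝 (r U) from hG.mem_nhds h)
        obtain ⟨V, hVK, hVopen, hrV⟩ := mem_nhds_iff.mp hKmem
        refine ⟨V, ⟨hVopen, K, hKcomp, hVK, hKG⟩, ?_⟩
        by_contra hVU
        have hVc : Vᶜ ∈ U := Ultrafilter.compl_mem_iff_notMem.mpr hVU
        have hne := clusterPt_iff_nonempty.mp (hrU_cluster U) (hVopen.mem_nhds hrV) hVc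
        simp at hne
      · rintro ⟨V, ⟨hVopen, K, hKcomp, hVK, hKG⟩, hVU⟩
        have hK : K ∈ U := U.mem_of_superset hVU hVK
        obtain ⟨x, hxK, hx⟩ := hKcomp (le_principal_iff.mpr hK)
        have hxcl : x ∈ closure ({r U} : Set X) := by rw [← hcl U]; exact hx
        obtain ⟨y, hyG, hy⟩ := mem_closure_iff.mp hxcl G hG (hKG hxK)
        rw [Set.mem_singleton_iff] at hy
        rwa [← hy]
    rw [hpre]
    refine isOpen_biUnion ?_
    intro V hV
    exact TopologicalSpace.isOpen_generateFrom_of_mem ⟨V, hV.1, rfl⟩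
  · intro x
    have h1 : {z : X | ClusterPt z ↑(pure x : Ultrafilter X)} = closure ({x} : Set X) := by
      ext z
      simp only [Set.mem_setOf_eq, mem_closure_iff_clusterPt]
      rw [Ultrafilter.coe_pure, ← principal_singleton]
    have h2 : closure ({r (pure x)} : Set X) = closure ({x} : Set X) := by
      rw [← hcl (pure x), h1]
    exact (inseparable_iff_closure_eq.mpr h2).eq
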